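/- arXiv:math/0112049 — 2 statements merged into one kernel-verified Lean document; each statement's English description precedes it below -/
import Mathlib

section
/- Let (Λ,d) be a k-graph satisfying the standing assumption (★). The map ((x,y),n) ↦ (x, n, σ^n y) is a bijection from G_s × ℤ^k, where G_s = {(x,y) ∈ Λ^Δ × Λ^Δ : x ~_s y}, onto the set {(x,n,z) ∈ Λ^Δ × ℤ^k × Λ^Δ : there exist ℓ,m ∈ ℕ^k with σ^ℓ(π x) = σ^m(π z) and n = ℓ − m}. In particular, for x,z ∈ Λ^Δ and n ∈ ℤ^k, there exist ℓ,m ∈ ℕ^k with σ^ℓ(π x) = σ^m(π z) and n = ℓ − m if and only if x ~_s σ^{−n} z. -/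
open scoped Classical
open TopologicalSpace MeasureTheory

/-- A `k`-graph: a countable small category with a degree functor to `ℕ^k`
satisfying the unique factorisation property.  Objects are identified with
the degree-zero morphisms. -/
structure KGraph (k : ℕ) where
  Mor : Type
  countable : Countable Mor
  src : Mor → Mor
  rng : Mor → Mor
  deg : Mor → Fin k → ℕ
  comp : (lam mu : Mor) → src lam = rng mu → Mor
  deg_src : ∀ lam, deg (src lam) = 0
  deg_rng : ∀ lam, deg (rng lam) = 0
  src_obj : ∀ v, deg v = 0 → src v = v
  rng_obj : ∀ v, deg v = 0 → rng v = v
  src_comp : ∀ lam mu h, src (comp lam mu h) = src mu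
  rng_comp : ∀ lam mu h, rng (comp lam mu h) = rng lam
  deg_comp : ∀ lam mu h, deg (comp lam mu h) = deg lam + deg mu
  id_comp : ∀ lam (h : src (rng lam) = rng lam), comp (rng lam) lam h = lam
  comp_id : ∀ lam (h : src lam = rng (src lam)), comp lam (src lam) h = lam
  assoc : ∀ l m n (h1 : src l = rng m) (h2 : src m = rng n)
      (h3 : src (comp l m h1) = rng n) (h4 : src l = rng (comp m n h2)),
      comp (comp l m h1) n h3 = comp l (comp m n h2) h4
  factor : ∀ lam (n1 n2 : Fin k → ℕ), deg lam = n1 + n2 →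
      ∃! p : Mor × Mor, deg p.1 = n1 ∧ deg p.2 = n2 ∧
        ∃ h : src p.1 = rng p.2, comp p.1 p.2 h = lam

namespace KGraph

variable {k : ℕ}

/-- The vertices (objects) of a `k`-graph are the degree-zero morphisms. -/
def IsVertex (Λ : KGraph k) (v : Λ.Mor) : Prop := Λ.deg v = 0

/-- Standing assumption (★): for each `p ∈ ℕ^k` the restrictions of `r` and `s`
to `Λ^p` are surjective (onto the vertices) and finite-to-one. -/
def Star (Λ : KGraph k) : Prop :=
  ∀ p : Fin k → ℕ,
    (∀ v, Λ.IsVertex v →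
      (∃ lam, Λ.deg lam = p ∧ Λ.rng lam = v) ∧
      (∃ lam, Λ.deg lam = p ∧ Λ.src lam = v)) ∧
    (∀ v, Λ.IsVertex v →
      {lam | Λ.deg lam = p ∧ Λ.rng lam = v}.Finite ∧
      {lam | Λ.deg lam = p ∧ Λ.src lam = v}.Finite)

/-- Irreducibility (strong connectedness) of a `k`-graph. -/
def Irreducible (Λ : KGraph k) : Prop :=
  ∀ u v, Λ.IsVertex u → Λ.IsVertex v →
    ∃ lam, Λ.deg lam ≠ 0 ∧ Λ.rng lam = u ∧ Λ.src lam = v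

/-- Primitivity of a `k`-graph. -/
def Primitive (Λ : KGraph k) : Prop :=
  ∃ p : Fin k → ℕ, p ≠ 0 ∧ ∀ u v, Λ.IsVertex u → Λ.IsVertex v →
    ∃ lam, Λ.deg lam = p ∧ Λ.rng lam = u ∧ Λ.src lam = v

/-- The degree of a morphism, viewed in `ℤ^k`. -/
def degZ (Λ : KGraph k) (lam : Λ.Mor) : Fin k → ℤ := fun i => (Λ.deg lam i : ℤ)

/-- The number of morphisms of degree `p` with range `u` and source `v`. -/
noncomputable def count (Λ : KGraph k) (p : Fin k → ℕ) (u v : Λ.Mor) : ℕ :=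
  Nat.card {lam : Λ.Mor // Λ.deg lam = p ∧ Λ.rng lam = u ∧ Λ.src lam = v}

end KGraph

/-- A two-sided infinite path in a `k`-graph: a degree-preserving functor from
the `k`-graph `Δ = {(m,n) ∈ ℤ^k × ℤ^k : m ≤ n}` to `Λ`. -/
structure TwoSidedPath {k : ℕ} (Λ : KGraph k) where
  toFun : ∀ m n : Fin k → ℤ, m ≤ n → Λ.Mor
  deg_eq : ∀ m n (h : m ≤ n) (i : Fin k), (Λ.deg (toFun m n h) i : ℤ) = n i - m i
  src_eq : ∀ m n (h : m ≤ n), Λ.src (toFun m n h) = toFun n n le_rfl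
  rng_eq : ∀ m n (h : m ≤ n), Λ.rng (toFun m n h) = toFun m m le_rfl
  comp_eq : ∀ l m n (h1 : l ≤ m) (h2 : m ≤ n),
      Λ.comp (toFun l m h1) (toFun m n h2)
        ((src_eq l m h1).trans (rng_eq m n h2).symm) = toFun l n (h1.trans h2)

/-- A one-sided infinite path in a `k`-graph: a degree-preserving functor from
the `k`-graph `Ω = {(m,n) ∈ ℕ^k × ℕ^k : m ≤ n}` to `Λ`. -/
structure OneSidedPath {k : ℕ} (Λ : KGraph k) where
  toFun : ∀ m n : Fin k → ℕ, m ≤ n → Λ.Mor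
  deg_eq : ∀ m n (h : m ≤ n) (i : Fin k), Λ.deg (toFun m n h) i = n i - m i
  src_eq : ∀ m n (h : m ≤ n), Λ.src (toFun m n h) = toFun n n le_rfl
  rng_eq : ∀ m n (h : m ≤ n), Λ.rng (toFun m n h) = toFun m m le_rfl
  comp_eq : ∀ l m n (h1 : l ≤ m) (h2 : m ≤ n),
      Λ.comp (toFun l m h1) (toFun m n h2)
        ((src_eq l m h1).trans (rng_eq m n h2).symm) = toFun l n (h1.trans h2)

namespace TwoSidedPath

variable {k : ℕ} {Λ : KGraph k}

theorem toFun_congr (x : TwoSidedPath Λ) {m n m' n' : Fin k → ℤ}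
    (hm : m = m') (hn : n = n') (h : m ≤ n) (h' : m' ≤ n') :
    x.toFun m n h = x.toFun m' n' h' := by subst hm; subst hn; rfl

/-- The vertex `x(0)` of a two-sided path. -/
def obj0 (x : TwoSidedPath Λ) : Λ.Mor := x.toFun 0 0 le_rfl

end TwoSidedPath

theorem le_add_degZ {k : ℕ} (Λ : KGraph k) (n : Fin k → ℤ) (lam : Λ.Mor) :
    n ≤ n + Λ.degZ lam :=
  Pi.le_def.mpr fun i => by
    show n i ≤ n i + (Λ.deg lam i : ℤ); omega

/-- The cylinder set `Z(λ, n) = {x ∈ Λ^Δ : x(n, n + d(λ)) = λ}`. -/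
def ZCyl {k : ℕ} (Λ : KGraph k) (lam : Λ.Mor) (n : Fin k → ℤ) :
    Set (TwoSidedPath Λ) :=
  {x | x.toFun n (n + Λ.degZ lam) (le_add_degZ Λ n lam) = lam}

/-- The topology on `Λ^Δ` generated by the cylinder sets. -/
instance {k : ℕ} (Λ : KGraph k) : TopologicalSpace (TwoSidedPath Λ) :=
  TopologicalSpace.generateFrom {S | ∃ lam n, S = ZCyl Λ lam n}

noncomputable instance {k : ℕ} (Λ : KGraph k) : MeasurableSpace (TwoSidedPath Λ) :=
  borel _

/-- The one-sided cylinder set `Z(λ) = {x ∈ Λ^Ω : x(0, d(λ)) = λ}`. -/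
def OCyl {k : ℕ} (Λ : KGraph k) (lam : Λ.Mor) : Set (OneSidedPath Λ) :=
  {x | x.toFun 0 (Λ.deg lam) (Pi.le_def.mpr fun _ => Nat.zero_le _) = lam}

/-- The topology on `Λ^Ω` generated by the cylinder sets. -/
instance {k : ℕ} (Λ : KGraph k) : TopologicalSpace (OneSidedPath Λ) :=
  TopologicalSpace.generateFrom {S | ∃ lam, S = OCyl Λ lam}

/-- The shift `σ^n` on the two-sided path space, for `n ∈ ℤ^k`. -/
def TwoSidedPath.shift {k : ℕ} {Λ : KGraph k} (n : Fin k → ℤ)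
    (x : TwoSidedPath Λ) : TwoSidedPath Λ where
  toFun l m h := x.toFun (l + n) (m + n) (add_le_add_left h n)
  deg_eq l m h i := by
    show (Λ.deg (x.toFun (l + n) (m + n) (add_le_add_left h n)) i : ℤ) = m i - l i
    have h' := x.deg_eq (l + n) (m + n) (add_le_add_left h n) i
    simp only [Pi.add_apply] at h'
    omega
  src_eq l m h := x.src_eq (l + n) (m + n) (add_le_add_left h n)
  rng_eq l m h := x.rng_eq (l + n) (m + n) (add_le_add_left h n)
  comp_eq l m m' h1 h2 :=
    x.comp_eq (l + n) (m + n) (m' + n) (add_le_add_left h1 n) (add_le_add_left h2 n)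

/-- The shift `σ^p` on the one-sided path space, for `p ∈ ℕ^k`. -/
def OneSidedPath.shift {k : ℕ} {Λ : KGraph k} (p : Fin k → ℕ)
    (x : OneSidedPath Λ) : OneSidedPath Λ where
  toFun l m h := x.toFun (l + p) (m + p) (add_le_add_left h p)
  deg_eq l m h i := by
    show Λ.deg (x.toFun (l + p) (m + p) (add_le_add_left h p)) i = m i - l i
    have h' := x.deg_eq (l + p) (m + p) (add_le_add_left h p) i
    simp only [Pi.add_apply] at h'
    omega
  src_eq l m h := x.src_eq (l + p) (m + p) (add_le_add_left h p)
  rng_eq l m h := x.rng_eq (l + p) (m + p) (add_le_add_left h p)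
  comp_eq l m m' h1 h2 :=
    x.comp_eq (l + p) (m + p) (m' + p) (add_le_add_left h1 p) (add_le_add_left h2 p)

/-- The vector `(j, …, j) ∈ ℤ^k`, i.e. `j·e` where `e = (1,…,1)`. -/
def jvecZ (k : ℕ) (j : ℕ) : Fin k → ℤ := fun _ => (j : ℤ)

theorem neg_jvecZ_le (k j : ℕ) : -(jvecZ k j) ≤ jvecZ k j :=
  Pi.le_def.mpr fun _ => by show -((j : ℤ)) ≤ (j : ℤ); omega

/-- Coercion `ℕ^k → ℤ^k`. -/
def coeZ {k : ℕ} (p : Fin k → ℕ) : Fin k → ℤ := fun i => (p i : ℤ)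

theorem coeZ_le_coeZ {k : ℕ} {m n : Fin k → ℕ} (h : m ≤ n) : coeZ m ≤ coeZ n :=
  Pi.le_def.mpr fun i => by
    show ((m i : ℤ)) ≤ (n i : ℤ)
    exact_mod_cast Pi.le_def.mp h i

theorem neg_coeZ_le {k : ℕ} (m : Fin k → ℕ) : -(coeZ m) ≤ coeZ m :=
  Pi.le_def.mpr fun i => by show -((m i : ℤ)) ≤ (m i : ℤ); omega

/-- The quantity `h(x,y) ∈ ℕ∞`:  `0` if `x(0) ≠ y(0)`, and otherwise
`1 + sup { j : x(-je, je) = y(-je, je) }`. -/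
noncomputable def hdist {k : ℕ} {Λ : KGraph k} (x y : TwoSidedPath Λ) : ℕ∞ :=
  if x.obj0 = y.obj0 then
    1 + sSup {c : ℕ∞ | ∃ j : ℕ, c = (j : ℕ∞) ∧
        x.toFun (-(jvecZ k j)) (jvecZ k j) (neg_jvecZ_le k j) =
        y.toFun (-(jvecZ k j)) (jvecZ k j) (neg_jvecZ_le k j)}
  else 0

/-- The metric `ρ(x,y) = r^{h(x,y)}`, with `r^∞ = 0`. -/
noncomputable def rho {k : ℕ} {Λ : KGraph k} (r : ℝ) (x y : TwoSidedPath Λ) : ℝ :=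
  if hdist x y = ⊤ then 0 else r ^ (hdist x y).toNat

/-- The local contracting set `E_x`. -/
def Ex {k : ℕ} {Λ : KGraph k} (x : TwoSidedPath Λ) : Set (TwoSidedPath Λ) :=
  {y | ∀ m n (h : m ≤ n), 0 ≤ m → y.toFun m n h = x.toFun m n h}

/-- The local expanding set `F_x`. -/
def Fx {k : ℕ} {Λ : KGraph k} (x : TwoSidedPath Λ) : Set (TwoSidedPath Λ) :=
  {y | ∀ m n (h : m ≤ n), n ≤ 0 → y.toFun m n h = x.toFun m n h}

/-- The restriction map `π : Λ^Δ → Λ^Ω`. -/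
def TwoSidedPath.restrict {k : ℕ} {Λ : KGraph k} (x : TwoSidedPath Λ) :
    OneSidedPath Λ where
  toFun m n h := x.toFun (coeZ m) (coeZ n) (coeZ_le_coeZ h)
  deg_eq m n h i := by
    show Λ.deg (x.toFun (coeZ m) (coeZ n) (coeZ_le_coeZ h)) i = n i - m i
    have h' := x.deg_eq (coeZ m) (coeZ n) (coeZ_le_coeZ h) i
    simp only [coeZ] at h'
    omega
  src_eq m n h := x.src_eq (coeZ m) (coeZ n) (coeZ_le_coeZ h)
  rng_eq m n h := x.rng_eq (coeZ m) (coeZ n) (coeZ_le_coeZ h)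
  comp_eq l m n h1 h2 :=
    x.comp_eq (coeZ l) (coeZ m) (coeZ n) (coeZ_le_coeZ h1) (coeZ_le_coeZ h2)

/-- Stable equivalence: `x ∼ₛ y` iff the two paths eventually agree to the right. -/
def SRel {k : ℕ} {Λ : KGraph k} (x y : TwoSidedPath Λ) : Prop :=
  ∃ m : Fin k → ℤ, ∀ n (h : m ≤ n), x.toFun m n h = y.toFun m n h

/-- Unstable equivalence: `x ∼ᵤ y` iff the two paths eventually agree to the left. -/
def URel {k : ℕ} {Λ : KGraph k} (x y : TwoSidedPath Λ) : Prop :=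
  ∃ n : Fin k → ℤ, ∀ m (h : m ≤ n), x.toFun m n h = y.toFun m n h

/-- Asymptotic equivalence: `x ∼ₐ y` iff `x ∼ₛ y` and `x ∼ᵤ y`. -/
def ARel {k : ℕ} {Λ : KGraph k} (x y : TwoSidedPath Λ) : Prop :=
  ∃ m : Fin k → ℕ, ∀ n : Fin k → ℤ, coeZ m ≤ n →
    (∀ h : coeZ m ≤ n, x.toFun (coeZ m) n h = y.toFun (coeZ m) n h) ∧
    (∀ h' : -n ≤ -(coeZ m), x.toFun (-n) (-(coeZ m)) h' = y.toFun (-n) (-(coeZ m)) h')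

/-- The groupoid `G_{s,m}` of pairs agreeing from `m ∈ ℤ^k` onwards. -/
def Gsm {k : ℕ} (Λ : KGraph k) (m : Fin k → ℤ) :
    Set (TwoSidedPath Λ × TwoSidedPath Λ) :=
  {p | ∀ n (h : m ≤ n), p.1.toFun m n h = p.2.toFun m n h}

theorem TwoSidedPath.self_mem_cyl {k : ℕ} {Λ : KGraph k} (x : TwoSidedPath Λ)
    (m n : Fin k → ℤ) (h : m ≤ n) : x ∈ ZCyl Λ (x.toFun m n h) m := by
  show x.toFun m (m + Λ.degZ (x.toFun m n h)) _ = x.toFun m n h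
  apply x.toFun_congr rfl
  funext i
  show m i + (Λ.deg (x.toFun m n h) i : ℤ) = n i
  have h' := x.deg_eq m n h i
  omega

theorem degZ_obj0 {k : ℕ} {Λ : KGraph k} (x : TwoSidedPath Λ) :
    Λ.degZ x.obj0 = 0 := by
  funext i
  show (Λ.deg (x.toFun 0 0 le_rfl) i : ℤ) = 0
  have h' := x.deg_eq 0 0 le_rfl i
  simp only [Pi.zero_apply] at h'
  omega

theorem mem_vertex_cyl {k : ℕ} {Λ : KGraph k} {x z : TwoSidedPath Λ}
    (hz : z ∈ ZCyl Λ x.obj0 0) : z.obj0 = x.obj0 := by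
  have h0 : (0 : Fin k → ℤ) = 0 + Λ.degZ x.obj0 := by rw [degZ_obj0]; simp
  calc z.obj0 = z.toFun 0 (0 + Λ.degZ x.obj0) (le_add_degZ Λ 0 x.obj0) :=
        z.toFun_congr rfl h0 le_rfl (le_add_degZ Λ 0 x.obj0)
    _ = x.obj0 := hz


theorem TwoSidedPath.ext' {k : ℕ} {Λ : KGraph k} {x y : TwoSidedPath Λ}
    (h : ∀ m n (hmn : m ≤ n), x.toFun m n hmn = y.toFun m n hmn) : x = y := by
  obtain ⟨xf, _, _, _, _⟩ := x
  obtain ⟨yf, _, _, _, _⟩ := y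
  have : xf = yf := by funext m n hmn; exact h m n hmn
  subst this
  rfl

theorem OneSidedPath.ext' {k : ℕ} {Λ : KGraph k} {x y : OneSidedPath Λ}
    (h : ∀ m n (hmn : m ≤ n), x.toFun m n hmn = y.toFun m n hmn) : x = y := by
  obtain ⟨xf, _, _, _, _⟩ := x
  obtain ⟨yf, _, _, _, _⟩ := y
  have : xf = yf := by funext m n hmn; exact h m n hmn
  subst this
  rfl

theorem TwoSidedPath.shift_neg_shift {k : ℕ} {Λ : KGraph k} (n : Fin k → ℤ)
    (x : TwoSidedPath Λ) : TwoSidedPath.shift (-n) (TwoSidedPath.shift n x) = x := by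
  apply TwoSidedPath.ext'
  intro m m' hmn
  show x.toFun (m + -n + n) (m' + -n + n) _ = x.toFun m m' hmn
  exact x.toFun_congr (by abel) (by abel) _ _

theorem TwoSidedPath.shift_shift_neg {k : ℕ} {Λ : KGraph k} (n : Fin k → ℤ)
    (x : TwoSidedPath Λ) : TwoSidedPath.shift n (TwoSidedPath.shift (-n) x) = x := by
  apply TwoSidedPath.ext'
  intro m m' hmn
  show x.toFun (m + n + -n) (m' + n + -n) _ = x.toFun m m' hmn
  exact x.toFun_congr (by abel) (by abel) _ _

/-- Propagation: if `x` and `y` agree on all segments with left endpoint `m0`,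
they agree on all segments within `[m0, ∞)`. -/
theorem agree_propagate {k : ℕ} {Λ : KGraph k} {x y : TwoSidedPath Λ}
    {m0 : Fin k → ℤ}
    (h : ∀ n (hn : m0 ≤ n), x.toFun m0 n hn = y.toFun m0 n hn) :
    ∀ a b (ha : m0 ≤ a) (hb : a ≤ b), x.toFun a b hb = y.toFun a b hb := by
  intro a b ha hb
  have hab : m0 ≤ b := ha.trans hb
  have hx := x.comp_eq m0 a b ha hb
  have hy := y.comp_eq m0 a b ha hb
  have hd1 : Λ.deg (y.toFun m0 a ha) = Λ.deg (x.toFun m0 a ha) := by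
    funext i
    have h1 := x.deg_eq m0 a ha i
    have h2 := y.deg_eq m0 a ha i
    omega
  have hd2 : Λ.deg (y.toFun a b hb) = Λ.deg (x.toFun a b hb) := by
    funext i
    have h1 := x.deg_eq a b hb i
    have h2 := y.deg_eq a b hb i
    omega
  obtain ⟨p, _, hup⟩ := Λ.factor (x.toFun m0 b hab) (Λ.deg (x.toFun m0 a ha))
    (Λ.deg (x.toFun a b hb)) (by rw [← hx, Λ.deg_comp])
  have e1 : (x.toFun m0 a ha, x.toFun a b hb) = p :=
    hup _ ⟨rfl, rfl, (x.src_eq m0 a ha).trans (x.rng_eq a b hb).symm, hx⟩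
  have e2 : (y.toFun m0 a ha, y.toFun a b hb) = p :=
    hup _ ⟨hd1, hd2, (y.src_eq m0 a ha).trans (y.rng_eq a b hb).symm,
      by rw [hy, ← h b hab]⟩
  have := e1.trans e2.symm
  exact congrArg Prod.snd this

theorem key_iff {k : ℕ} (Λ : KGraph k) (x z : TwoSidedPath Λ) (n : Fin k → ℤ) :
    (∃ l m : Fin k → ℕ,
        OneSidedPath.shift l x.restrict = OneSidedPath.shift m z.restrict ∧
        n = coeZ l - coeZ m) ↔
      SRel x (TwoSidedPath.shift (-n) z) := by
  constructor
  · rintro ⟨l, m, heq, hn⟩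
    refine ⟨coeZ l, fun n' hn' => ?_⟩
    set q : Fin k → ℕ := fun i => (n' i - l i).toNat with hq
    have hq0 : (0 : Fin k → ℕ) ≤ q := fun i => Nat.zero_le _
    have hcongr := congrArg (fun w : OneSidedPath Λ => w.toFun 0 q hq0) heq
    have hL : (OneSidedPath.shift l x.restrict).toFun 0 q hq0 =
        x.toFun (coeZ l) n' hn' := by
      show x.toFun (coeZ (0 + l)) (coeZ (q + l)) _ = x.toFun (coeZ l) n' hn'
      apply x.toFun_congr
      · funext i; simp [coeZ]
      · funext i
        have := Pi.le_def.mp hn' i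
        simp only [coeZ, Pi.add_apply, Nat.cast_add, hq]
        have hli : (l i : ℤ) ≤ n' i := by
          have := Pi.le_def.mp hn' i
          simpa [coeZ] using this
        omega
    have hR : (OneSidedPath.shift m z.restrict).toFun 0 q hq0 =
        (TwoSidedPath.shift (-n) z).toFun (coeZ l) n' hn' := by
      show z.toFun (coeZ (0 + m)) (coeZ (q + m)) _ =
        z.toFun (coeZ l + -n) (n' + -n) _
      apply z.toFun_congr
      · funext i
        have := congrFun hn i
        simp only [coeZ, Pi.add_apply, Pi.neg_apply, Pi.sub_apply,
          Pi.zero_apply, Nat.cast_add, Nat.cast_zero] at this ⊢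
        omega
      · funext i
        have h1 := congrFun hn i
        have hli : (l i : ℤ) ≤ n' i := by
          have := Pi.le_def.mp hn' i
          simpa [coeZ] using this
        simp only [coeZ, Pi.add_apply, Pi.neg_apply, Pi.sub_apply, hq,
          Nat.cast_add] at h1 ⊢
        omega
    exact hL.symm.trans (hcongr.trans hR)
  · rintro ⟨m0, hm0⟩
    set l : Fin k → ℕ := fun i => (max (m0 i) (max (n i) 0)).toNat with hl
    set m : Fin k → ℕ := fun i => ((l i : ℤ) - n i).toNat with hm
    have hm0l : m0 ≤ coeZ l := by
      intro i; simp only [coeZ, hl]; omega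
    have hnl : n ≤ coeZ l := by
      intro i; simp only [coeZ, hl]; omega
    have hml : ∀ i, (m i : ℤ) = (l i : ℤ) - n i := by
      intro i
      have := Pi.le_def.mp hnl i
      simp only [coeZ] at this
      simp only [hm]
      omega
    refine ⟨l, m, ?_, ?_⟩
    · apply OneSidedPath.ext'
      intro p q hpq
      show x.toFun (coeZ (p + l)) (coeZ (q + l)) _ =
        z.toFun (coeZ (p + m)) (coeZ (q + m)) _
      have hle : m0 ≤ coeZ (p + l) := by
        intro i
        have := Pi.le_def.mp hm0l i
        simp only [coeZ, Pi.add_apply, Nat.cast_add] at this ⊢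
        omega
      have := agree_propagate hm0 (coeZ (p + l)) (coeZ (q + l)) hle
        (coeZ_le_coeZ (add_le_add_left hpq l))
      rw [this]
      show z.toFun (coeZ (p + l) + -n) (coeZ (q + l) + -n) _ = _
      apply z.toFun_congr
      · funext i
        have := hml i
        simp only [coeZ, Pi.add_apply, Pi.neg_apply, Nat.cast_add]
        omega
      · funext i
        have := hml i
        simp only [coeZ, Pi.add_apply, Pi.neg_apply, Nat.cast_add]
        omega
    · funext i
      have := hml i
      simp only [coeZ, Pi.sub_apply]
      omega

/-- The map `((x,y), n) ↦ (x, n, σ^n y)` is a bijection from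
`G_s × ℤ^k` onto `{(x, n, z) : σ^ℓ(π x) = σ^m(π z), n = ℓ - m}`; in
particular `(x, n, z)` lies in the latter set iff `x ∼ₛ σ^{-n} z`. -/
theorem semidirect_product_bijection {k : ℕ} (hk : 0 < k) (Λ : KGraph k)
    (hstar : Λ.Star) :
    Set.BijOn
      (fun q : (TwoSidedPath Λ × TwoSidedPath Λ) × (Fin k → ℤ) =>
        (q.1.1, q.2, TwoSidedPath.shift q.2 q.1.2))
      {q : (TwoSidedPath Λ × TwoSidedPath Λ) × (Fin k → ℤ) | SRel q.1.1 q.1.2}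
      {w : TwoSidedPath Λ × (Fin k → ℤ) × TwoSidedPath Λ |
        ∃ l m : Fin k → ℕ,
          OneSidedPath.shift l w.1.restrict = OneSidedPath.shift m w.2.2.restrict ∧
          w.2.1 = coeZ l - coeZ m} ∧
    ∀ (x z : TwoSidedPath Λ) (n : Fin k → ℤ),
      (∃ l m : Fin k → ℕ,
        OneSidedPath.shift l x.restrict = OneSidedPath.shift m z.restrict ∧
        n = coeZ l - coeZ m) ↔
      SRel x (TwoSidedPath.shift (-n) z) := by
  refine ⟨⟨?_, ?_, ?_⟩, fun x z n => key_iff Λ x z n⟩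
  · -- MapsTo
    rintro ⟨⟨x, y⟩, n⟩ hs
    simp only [Set.mem_setOf_eq] at hs ⊢
    refine (key_iff Λ x (TwoSidedPath.shift n y) n).mpr ?_
    rwa [TwoSidedPath.shift_neg_shift]
  · -- InjOn
    rintro ⟨⟨x1, y1⟩, n1⟩ _ ⟨⟨x2, y2⟩, n2⟩ _ h
    simp only [Prod.mk.injEq] at h
    obtain ⟨hx, hn, hy⟩ := h
    subst hx; subst hn
    have : y1 = y2 := by
      have := congrArg (TwoSidedPath.shift (-n1)) hy
      rwa [TwoSidedPath.shift_neg_shift, TwoSidedPath.shift_neg_shift] at this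
    rw [this]
  · -- SurjOn
    rintro ⟨x, n, z⟩ hw
    simp only [Set.mem_setOf_eq] at hw
    have hs : SRel x (TwoSidedPath.shift (-n) z) := (key_iff Λ x z n).mp hw
    refine ⟨((x, TwoSidedPath.shift (-n) z), n), hs, ?_⟩
    show (x, n, TwoSidedPath.shift n (TwoSidedPath.shift (-n) z)) = (x, n, z)
    rw [TwoSidedPath.shift_shift_neg]
end

section
/- Let (Λ,d) be a k-graph satisfying the standing assumption (★). Let m ∈ ℕ^k and let x,y ∈ Λ^Δ satisfy x(m,n) = y(m,n) and x(−n,−m) = y(−n,−m) for all n ≥ m; set λ = x(−m,m) and ν = y(−m,m). Then there exists a unique map φ : Z(λ,−m) → Z(ν,−m) such that for every z ∈ Z(λ,−m) and every n ≥ m, φ(z)(m,n) = z(m,n) and φ(z)(−n,−m) = z(−n,−m); moreover φ(x) = y, z ~_a φ(z) for all z ∈ Z(λ,−m), and φ is a homeomorphism of Z(λ,−m) onto Z(ν,−m). -/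
open scoped Classical
open TopologicalSpace MeasureTheory

section SpliceAux

variable {k : ℕ} {Λ : KGraph k}

/-- Degree of the box `[a,b]` as an element of `ℕ^k`. -/
def dN (a b : Fin k → ℤ) : Fin k → ℕ := fun i => (b i - a i).toNat

theorem dN_apply (a b : Fin k → ℤ) (i : Fin k) : dN a b i = (b i - a i).toNat := rfl

theorem deg_toFun (z : TwoSidedPath Λ) (a b : Fin k → ℤ) (h : a ≤ b) :
    Λ.deg (z.toFun a b h) = dN a b := by
  funext i
  have h1 := z.deg_eq a b h i
  have h2 : a i ≤ b i := h i
  simp only [dN]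
  omega

theorem comp_congr {a b a' b' : Λ.Mor} (ha : a = a') (hb : b = b')
    (h : Λ.src a = Λ.rng b) (h' : Λ.src a' = Λ.rng b') :
    Λ.comp a b h = Λ.comp a' b' h' := by subst ha; subst hb; rfl

theorem factor_unique {α β α' β' : Λ.Mor}
    (h : Λ.src α = Λ.rng β) (h' : Λ.src α' = Λ.rng β')
    (hd : Λ.deg α = Λ.deg α') (he : Λ.comp α β h = Λ.comp α' β' h') :
    α = α' ∧ β = β' := by
  obtain ⟨p, -, hu⟩ := Λ.factor (Λ.comp α β h) (Λ.deg α) (Λ.deg β) (Λ.deg_comp _ _ _)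
  have hdβ : Λ.deg β' = Λ.deg β := by
    have h1 := Λ.deg_comp α β h
    have h2 := Λ.deg_comp α' β' h'
    rw [he] at h1
    rw [h1, hd] at h2
    exact (add_left_cancel h2.symm)
  have e1 := hu (α, β) ⟨rfl, rfl, h, rfl⟩
  have e2 := hu (α', β') ⟨hd.symm, hdβ, h', he.symm⟩
  have := e2.trans e1.symm
  exact ⟨(Prod.mk.injEq _ _ _ _ ▸ this).1.symm, (Prod.mk.injEq _ _ _ _ ▸ this).2.symm⟩

theorem msl_exists (Λ : KGraph k) (μ : Λ.Mor) (p q r : Fin k → ℕ)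
    (h : Λ.deg μ = p + (q + r)) :
    ∃ β : Λ.Mor, Λ.deg β = q ∧
    ∃ (α γ : Λ.Mor) (h2 : Λ.src β = Λ.rng γ)
      (h1 : Λ.src α = Λ.rng (Λ.comp β γ h2)),
      Λ.deg α = p ∧ Λ.deg γ = r ∧
      Λ.comp α (Λ.comp β γ h2) h1 = μ := by
  obtain ⟨⟨α, δ⟩, ⟨hdα, hdδ, hc, he⟩, -⟩ := Λ.factor μ p (q + r) h
  obtain ⟨⟨β, γ⟩, ⟨hdβ, hdγ, hc2, he2⟩, -⟩ := Λ.factor δ q r hdδ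
  subst he2
  exact ⟨β, hdβ, α, γ, hc2, hc, hdα, hdγ, he⟩

/-- The middle factor of `μ` in the factorisation with degrees `p, q, r`. -/
noncomputable def msl (Λ : KGraph k) (μ : Λ.Mor) (p q r : Fin k → ℕ)
    (h : Λ.deg μ = p + (q + r)) : Λ.Mor :=
  (msl_exists Λ μ p q r h).choose

theorem msl_spec (Λ : KGraph k) (μ : Λ.Mor) (p q r : Fin k → ℕ)
    (h : Λ.deg μ = p + (q + r)) :
    Λ.deg (msl Λ μ p q r h) = q ∧
    ∃ (α γ : Λ.Mor) (h2 : Λ.src (msl Λ μ p q r h) = Λ.rng γ)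
      (h1 : Λ.src α = Λ.rng (Λ.comp (msl Λ μ p q r h) γ h2)),
      Λ.deg α = p ∧ Λ.deg γ = r ∧
      Λ.comp α (Λ.comp (msl Λ μ p q r h) γ h2) h1 = μ :=
  (msl_exists Λ μ p q r h).choose_spec

theorem msl_deg (Λ : KGraph k) (μ : Λ.Mor) (p q r : Fin k → ℕ)
    (h : Λ.deg μ = p + (q + r)) : Λ.deg (msl Λ μ p q r h) = q :=
  (msl_spec Λ μ p q r h).1

theorem msl_unique {μ α β γ : Λ.Mor} {p q r : Fin k → ℕ} {h : Λ.deg μ = p + (q + r)}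
    (hα : Λ.deg α = p) (hβ : Λ.deg β = q)
    (h2 : Λ.src β = Λ.rng γ) (h1 : Λ.src α = Λ.rng (Λ.comp β γ h2))
    (he : Λ.comp α (Λ.comp β γ h2) h1 = μ) :
    msl Λ μ p q r h = β := by
  obtain ⟨hdβ₀, α₀, γ₀, h2₀, h1₀, hα₀, hγ₀, he₀⟩ := msl_spec Λ μ p q r h
  have houter := factor_unique h1 h1₀ (hα.trans hα₀.symm) (he.trans he₀.symm)
  have hinner := factor_unique h2 h2₀ (hβ.trans hdβ₀.symm)
      (houter.2.trans (by rfl))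
  exact hinner.1.symm

/-- Any segment of a path is the slice of a bigger segment. -/
theorem toFun_eq_msl (z : TwoSidedPath Λ) {l a b n : Fin k → ℤ}
    (hla : l ≤ a) (hab : a ≤ b) (hbn : b ≤ n)
    (h : Λ.deg (z.toFun l n ((hla.trans hab).trans hbn)) = dN l a + (dN a b + dN b n)) :
    msl Λ (z.toFun l n ((hla.trans hab).trans hbn)) (dN l a) (dN a b) (dN b n) h =
      z.toFun a b hab := by
  apply msl_unique (deg_toFun z l a hla) (deg_toFun z a b hab)
    ((z.src_eq a b hab).trans (z.rng_eq b n hbn).symm)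
  case h1 =>
    rw [Λ.rng_comp]
    exact (z.src_eq l a hla).trans (z.rng_eq a b hab).symm
  exact (comp_congr rfl (z.comp_eq a b n hab hbn) _
      ((z.src_eq l a hla).trans (z.rng_eq a n (hab.trans hbn)).symm)).trans
    (z.comp_eq l a n hla (hab.trans hbn))

theorem dN_add {a b c : Fin k → ℤ} (hab : a ≤ b) (hbc : b ≤ c) :
    dN a b + dN b c = dN a c := by
  funext i
  have h1 : a i ≤ b i := hab i
  have h2 : b i ≤ c i := hbc i
  simp only [Pi.add_apply, dN]
  omega

theorem deg_toFun_eq (z : TwoSidedPath Λ) {l a b n : Fin k → ℤ}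
    (hla : l ≤ a) (hab : a ≤ b) (hbn : b ≤ n) :
    Λ.deg (z.toFun l n ((hla.trans hab).trans hbn)) = dN l a + (dN a b + dN b n) := by
  rw [deg_toFun, dN_add hab hbn, dN_add hla (hab.trans hbn)]

end SpliceAux

section SpliceAux2

variable {k : ℕ} {Λ : KGraph k}

theorem msl_congr {μ μ' : Λ.Mor} (e : μ = μ') (p q r : Fin k → ℕ)
    (h : Λ.deg μ = p + (q + r)) (h' : Λ.deg μ' = p + (q + r)) :
    msl Λ μ p q r h = msl Λ μ' p q r h' := by subst e; rfl

theorem comp3 (z : TwoSidedPath Λ) {l a b n : Fin k → ℤ}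
    (hla : l ≤ a) (hab : a ≤ b) (hbn : b ≤ n)
    (p : Λ.src (z.toFun a b hab) = Λ.rng (z.toFun b n hbn))
    (q : Λ.src (z.toFun l a hla) = Λ.rng (Λ.comp (z.toFun a b hab) (z.toFun b n hbn) p)) :
    Λ.comp (z.toFun l a hla) (Λ.comp (z.toFun a b hab) (z.toFun b n hbn) p) q =
      z.toFun l n ((hla.trans hab).trans hbn) :=
  (comp_congr rfl (z.comp_eq a b n hab hbn) _
      ((z.src_eq l a hla).trans (z.rng_eq a n (hab.trans hbn)).symm)).trans
    (z.comp_eq l a n hla (hab.trans hbn))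

theorem comp3_defined (z : TwoSidedPath Λ) {l a b n : Fin k → ℤ}
    (hla : l ≤ a) (hab : a ≤ b) (hbn : b ≤ n) :
    (Λ.src (z.toFun a b hab) = Λ.rng (z.toFun b n hbn)) ∧
    ∀ p, Λ.src (z.toFun l a hla) = Λ.rng (Λ.comp (z.toFun a b hab) (z.toFun b n hbn) p) :=
  ⟨(z.src_eq a b hab).trans (z.rng_eq b n hbn).symm,
   fun _ => by rw [Λ.rng_comp]; exact (z.src_eq l a hla).trans (z.rng_eq a b hab).symm⟩

theorem path_ext {z1 z2 : TwoSidedPath Λ}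
    (h : ∀ a b (hab : a ≤ b), z1.toFun a b hab = z2.toFun a b hab) : z1 = z2 := by
  cases z1; cases z2
  congr 1
  funext a b hab
  exact h a b hab

theorem neg_le_of_ge {a n : Fin k → ℤ} (h : -a ≤ n) : -n ≤ a := by
  intro i
  have : -a i ≤ n i := h i
  show -n i ≤ a i
  omega

/-- A two-sided path is determined by its `(-m,m)` segment and its two tails. -/
theorem path_ext_of_tails (m : Fin k → ℕ) {z1 z2 : TwoSidedPath Λ}
    (hmid : z1.toFun (-(coeZ m)) (coeZ m) (neg_coeZ_le m) =
      z2.toFun (-(coeZ m)) (coeZ m) (neg_coeZ_le m))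
    (hright : ∀ n (h : coeZ m ≤ n), z1.toFun (coeZ m) n h = z2.toFun (coeZ m) n h)
    (hleft : ∀ n (hn : coeZ m ≤ n) (h' : -n ≤ -(coeZ m)),
      z1.toFun (-n) (-(coeZ m)) h' = z2.toFun (-n) (-(coeZ m)) h') :
    z1 = z2 := by
  apply path_ext
  intro a b hab
  set M : Fin k → ℤ := coeZ m with hM
  set n : Fin k → ℤ := M ⊔ (-a ⊔ b) with hn
  have hMn : M ≤ n := le_sup_left
  have hna : -n ≤ a := neg_le_of_ge (le_sup_of_le_right le_sup_left)
  have hbn : b ≤ n := le_sup_of_le_right le_sup_right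
  have hnM : -n ≤ -M := neg_le_neg hMn
  have hMM : -M ≤ M := neg_coeZ_le m
  have hnn : -n ≤ n := hnM.trans (hMM.trans hMn)
  -- the big segments agree
  have hbig : z1.toFun (-n) n hnn = z2.toFun (-n) n hnn := by
    rw [← comp3 z1 hnM hMM hMn (comp3_defined z1 hnM hMM hMn).1
          ((comp3_defined z1 hnM hMM hMn).2 _),
        ← comp3 z2 hnM hMM hMn (comp3_defined z2 hnM hMM hMn).1
          ((comp3_defined z2 hnM hMM hMn).2 _)]
    exact comp_congr (hleft n hMn hnM) (comp_congr hmid (hright n hMn) _ _) _ _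
  calc z1.toFun a b hab
      = msl Λ (z1.toFun (-n) n hnn) (dN (-n) a) (dN a b) (dN b n)
          (deg_toFun_eq z1 hna hab hbn) := (toFun_eq_msl z1 hna hab hbn _).symm
    _ = msl Λ (z2.toFun (-n) n hnn) (dN (-n) a) (dN a b) (dN b n)
          (deg_toFun_eq z2 hna hab hbn) := msl_congr hbig _ _ _ _ _
    _ = z2.toFun a b hab := toFun_eq_msl z2 hna hab hbn _

end SpliceAux2

section Splice

variable {k : ℕ} {Λ : KGraph k}

/-- Data for splicing: a path `z` whose `(-m,m)` segment is `lam`, together with a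
replacement morphism `nu` with the same degree, range and source as `lam`. -/
structure SpliceData (Λ : KGraph k) (m : Fin k → ℕ) where
  lam : Λ.Mor
  nu : Λ.Mor
  z : TwoSidedPath Λ
  hd : Λ.deg nu = Λ.deg lam
  hrng : Λ.rng nu = Λ.rng lam
  hsrc : Λ.src nu = Λ.src lam
  hz : z.toFun (-(coeZ m)) (coeZ m) (neg_coeZ_le m) = lam

namespace SpliceData

variable {m : Fin k → ℕ} (D : SpliceData Λ m)

theorem comp1 {n : Fin k → ℤ} (hn : coeZ m ≤ n) :
    Λ.src (D.z.toFun (-n) (-(coeZ m)) (neg_le_neg hn)) = Λ.rng D.nu := by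
  rw [D.z.src_eq, D.hrng, ← D.hz, D.z.rng_eq]

theorem comp2 {n : Fin k → ℤ} (hn : coeZ m ≤ n) :
    Λ.src D.nu = Λ.rng (D.z.toFun (coeZ m) n hn) := by
  rw [D.hsrc, ← D.hz, D.z.src_eq, D.z.rng_eq]

/-- The "big segment" of the spliced path from `-n` to `n`. -/
def Big (n : Fin k → ℤ) (hn : coeZ m ≤ n) : Λ.Mor :=
  Λ.comp (Λ.comp (D.z.toFun (-n) (-(coeZ m)) (neg_le_neg hn)) D.nu (D.comp1 hn))
    (D.z.toFun (coeZ m) n hn) (by rw [Λ.src_comp]; exact D.comp2 hn)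

theorem deg_lam : Λ.deg D.lam = dN (-(coeZ m)) (coeZ m) := by
  rw [← D.hz, deg_toFun]

theorem Big_deg (n : Fin k → ℤ) (hn : coeZ m ≤ n) :
    Λ.deg (D.Big n hn) = dN (-n) n := by
  have hnM : -n ≤ -(coeZ m) := neg_le_neg hn
  have hMM : -(coeZ m) ≤ coeZ m := neg_coeZ_le m
  rw [Big, Λ.deg_comp, Λ.deg_comp, deg_toFun, deg_toFun, D.hd, D.deg_lam,
    dN_add hnM hMM, dN_add (hnM.trans hMM) hn]

theorem Big_deg3 {a b n : Fin k → ℤ} (hn : coeZ m ≤ n)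
    (hna : -n ≤ a) (hab : a ≤ b) (hbn : b ≤ n) :
    Λ.deg (D.Big n hn) = dN (-n) a + (dN a b + dN b n) := by
  rw [D.Big_deg n hn, dN_add hab hbn, dN_add hna (hab.trans hbn)]

theorem Big_rng (n : Fin k → ℤ) (hn : coeZ m ≤ n) :
    Λ.rng (D.Big n hn) = D.z.toFun (-n) (-n) le_rfl := by
  rw [Big, Λ.rng_comp, Λ.rng_comp, D.z.rng_eq]

theorem Big_src (n : Fin k → ℤ) (hn : coeZ m ≤ n) :
    Λ.src (D.Big n hn) = D.z.toFun n n le_rfl := by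
  rw [Big, Λ.src_comp, D.z.src_eq]

/-- Coherence: the big segments are nested compatibly. -/
theorem Big_coh {n n' : Fin k → ℤ} (hn : coeZ m ≤ n) (hnn' : n ≤ n')
    (p : Λ.src (D.Big n hn) = Λ.rng (D.z.toFun n n' hnn'))
    (q : Λ.src (D.z.toFun (-n') (-n) (neg_le_neg hnn')) =
      Λ.rng (Λ.comp (D.Big n hn) (D.z.toFun n n' hnn') p)) :
    D.Big n' (hn.trans hnn') =
      Λ.comp (D.z.toFun (-n') (-n) (neg_le_neg hnn'))
        (Λ.comp (D.Big n hn) (D.z.toFun n n' hnn') p) q := by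
  have hn' : coeZ m ≤ n' := hn.trans hnn'
  have hnM : -n ≤ -(coeZ m) := neg_le_neg hn
  have hn'n : -n' ≤ -n := neg_le_neg hnn'
  set Z1 := D.z.toFun (-n') (-n) hn'n with hZ1
  set Z2 := D.z.toFun n n' hnn' with hZ2
  set A := D.z.toFun (-n) (-(coeZ m)) hnM with hA
  set C := D.z.toFun (coeZ m) n hn with hC
  have h1 : Λ.src Z1 = Λ.rng A := (D.z.src_eq _ _ _).trans (D.z.rng_eq _ _ _).symm
  have h2 : Λ.src A = Λ.rng D.nu := D.comp1 hn
  have h3 : Λ.src D.nu = Λ.rng C := D.comp2 hn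
  have h4 : Λ.src C = Λ.rng Z2 := (D.z.src_eq _ _ _).trans (D.z.rng_eq _ _ _).symm
  have hAν : Λ.src (Λ.comp A D.nu h2) = Λ.rng C := by rw [Λ.src_comp]; exact h3
  have hZ1A : Λ.src (Λ.comp Z1 A h1) = Λ.rng D.nu := by rw [Λ.src_comp]; exact h2
  have hZ1Aν : Λ.src Z1 = Λ.rng (Λ.comp A D.nu h2) := by rw [Λ.rng_comp]; exact h1
  have hCZ2 : Λ.src (Λ.comp A D.nu h2) = Λ.rng (Λ.comp C Z2 h4) := by
    rw [Λ.src_comp, Λ.rng_comp]; exact h3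
  have hBigC : Λ.src (Λ.comp (Λ.comp Z1 A h1) D.nu hZ1A) = Λ.rng (Λ.comp C Z2 h4) := by
    rw [Λ.src_comp, Λ.rng_comp]; exact h3
  have hZ1big : Λ.src (Λ.comp Z1 (Λ.comp A D.nu h2) hZ1Aν) = Λ.rng (Λ.comp C Z2 h4) := by
    rw [Λ.src_comp, Λ.src_comp, Λ.rng_comp]; exact h3
  have hZ1all : Λ.src Z1 = Λ.rng (Λ.comp (Λ.comp A D.nu h2) (Λ.comp C Z2 h4) hCZ2) := by
    rw [Λ.rng_comp, Λ.rng_comp]; exact h1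
  -- Big n' = ((Z1·A)·ν)·(C·Z2)
  have e1 : D.Big n' hn' =
      Λ.comp (Λ.comp (Λ.comp Z1 A h1) D.nu hZ1A) (Λ.comp C Z2 h4) hBigC := by
    rw [Big]
    exact comp_congr (comp_congr (D.z.comp_eq _ _ _ hn'n hnM).symm rfl _ _)
      (D.z.comp_eq _ _ _ hn hnn').symm _ _
  rw [e1]
  calc Λ.comp (Λ.comp (Λ.comp Z1 A h1) D.nu hZ1A) (Λ.comp C Z2 h4) hBigC
      = Λ.comp (Λ.comp Z1 (Λ.comp A D.nu h2) hZ1Aν) (Λ.comp C Z2 h4) hZ1big :=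
        comp_congr (Λ.assoc Z1 A D.nu h1 h2 hZ1A hZ1Aν) rfl _ _
    _ = Λ.comp Z1 (Λ.comp (Λ.comp A D.nu h2) (Λ.comp C Z2 h4) hCZ2) hZ1all :=
        Λ.assoc Z1 (Λ.comp A D.nu h2) (Λ.comp C Z2 h4) hZ1Aν hCZ2 hZ1big hZ1all
    _ = Λ.comp Z1 (Λ.comp (Λ.comp (Λ.comp A D.nu h2) C hAν) Z2
          (by rw [Λ.src_comp]; exact h4)) (by rw [Λ.rng_comp, Λ.rng_comp, Λ.rng_comp]; exact h1) :=
        comp_congr rfl (Λ.assoc (Λ.comp A D.nu h2) C Z2 hAν h4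
          (by rw [Λ.src_comp]; exact h4) hCZ2).symm _ _
    _ = Λ.comp Z1 (Λ.comp (D.Big n hn) Z2 p) q := rfl

end SpliceData

end Splice

section Splice2

variable {k : ℕ} {Λ : KGraph k}

namespace SpliceData

variable {m : Fin k → ℕ} (D : SpliceData Λ m)

theorem msl_Big_mono {a b n n' : Fin k → ℤ} (hab : a ≤ b) (hn : coeZ m ≤ n)
    (hnn' : n ≤ n') (hna : -n ≤ a) (hbn : b ≤ n)
    (hdeg' : Λ.deg (D.Big n' (hn.trans hnn')) = dN (-n') a + (dN a b + dN b n'))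
    (hdeg : Λ.deg (D.Big n hn) = dN (-n) a + (dN a b + dN b n)) :
    msl Λ (D.Big n' (hn.trans hnn')) (dN (-n') a) (dN a b) (dN b n') hdeg' =
      msl Λ (D.Big n hn) (dN (-n) a) (dN a b) (dN b n) hdeg := by
  have hn' : coeZ m ≤ n' := hn.trans hnn'
  have hn'n : -n' ≤ -n := neg_le_neg hnn'
  obtain ⟨hdβ, α, γ, h2, h1, hdα, hdγ, he⟩ := msl_spec Λ (D.Big n hn)
    (dN (-n) a) (dN a b) (dN b n) hdeg
  set β := msl Λ (D.Big n hn) (dN (-n) a) (dN a b) (dN b n) hdeg with hβdef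
  have hαβ : Λ.src α = Λ.rng β := by rw [Λ.rng_comp] at h1; exact h1
  have hrngα : Λ.rng α = D.z.toFun (-n) (-n) le_rfl := by
    have := congrArg Λ.rng he
    rw [Λ.rng_comp, D.Big_rng] at this
    exact this
  have hsrcγ : Λ.src γ = D.z.toFun n n le_rfl := by
    have := congrArg Λ.src he
    rw [Λ.src_comp, Λ.src_comp, D.Big_src] at this
    exact this
  set Z1 := D.z.toFun (-n') (-n) hn'n with hZ1
  set Z2 := D.z.toFun n n' hnn' with hZ2
  have pZ1 : Λ.src Z1 = Λ.rng α := (D.z.src_eq _ _ _).trans hrngα.symm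
  have pγZ2 : Λ.src γ = Λ.rng Z2 := hsrcγ.trans (D.z.rng_eq _ _ _).symm
  have pβγZ2 : Λ.src β = Λ.rng (Λ.comp γ Z2 pγZ2) := by rw [Λ.rng_comp]; exact h2
  have pZ1α : Λ.src (Λ.comp Z1 α pZ1) =
      Λ.rng (Λ.comp β (Λ.comp γ Z2 pγZ2) pβγZ2) := by
    rw [Λ.src_comp, Λ.rng_comp]; exact hαβ
  have pBGZ2 : Λ.src (Λ.comp β γ h2) = Λ.rng Z2 := by rw [Λ.src_comp]; exact pγZ2
  have pαBGZ2 : Λ.src α = Λ.rng (Λ.comp (Λ.comp β γ h2) Z2 pBGZ2) := by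
    rw [Λ.rng_comp]; exact h1
  have pBig : Λ.src (D.Big n hn) = Λ.rng Z2 := by
    rw [D.Big_src]; exact (D.z.rng_eq _ _ _).symm
  have qBig : Λ.src Z1 = Λ.rng (Λ.comp (D.Big n hn) Z2 pBig) := by
    rw [Λ.rng_comp, D.Big_rng]; exact D.z.src_eq _ _ _
  have pX : Λ.src (Λ.comp α (Λ.comp β γ h2) h1) = Λ.rng Z2 := by
    rw [Λ.src_comp]; exact pBGZ2
  have pQ1 : Λ.src (Λ.comp Z1 α pZ1) = Λ.rng (Λ.comp (Λ.comp β γ h2) Z2 pBGZ2) := by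
    rw [Λ.src_comp, Λ.rng_comp]; exact h1
  have he' : Λ.comp (Λ.comp Z1 α pZ1) (Λ.comp β (Λ.comp γ Z2 pγZ2) pβγZ2) pZ1α =
      D.Big n' hn' := by
    rw [D.Big_coh hn hnn' pBig qBig]
    calc Λ.comp (Λ.comp Z1 α pZ1) (Λ.comp β (Λ.comp γ Z2 pγZ2) pβγZ2) pZ1α
        = Λ.comp (Λ.comp Z1 α pZ1) (Λ.comp (Λ.comp β γ h2) Z2 pBGZ2) pQ1 :=
          comp_congr rfl (Λ.assoc β γ Z2 h2 pγZ2 pBGZ2 pβγZ2).symm _ _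
      _ = Λ.comp Z1 (Λ.comp α (Λ.comp (Λ.comp β γ h2) Z2 pBGZ2) pαBGZ2)
            (by rw [Λ.rng_comp]; exact pZ1) :=
          Λ.assoc Z1 α (Λ.comp (Λ.comp β γ h2) Z2 pBGZ2) pZ1 pαBGZ2 pQ1 _
      _ = Λ.comp Z1 (Λ.comp (Λ.comp α (Λ.comp β γ h2) h1) Z2 pX)
            (by rw [Λ.rng_comp, Λ.rng_comp]; exact pZ1) :=
          comp_congr rfl (Λ.assoc α (Λ.comp β γ h2) Z2 h1 pBGZ2 pX pαBGZ2).symm _ _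
      _ = Λ.comp Z1 (Λ.comp (D.Big n hn) Z2 pBig) qBig :=
          comp_congr rfl (comp_congr he rfl _ _) _ _
  refine msl_unique ?_ hdβ pβγZ2 pZ1α he'
  rw [Λ.deg_comp, deg_toFun, hdα, dN_add hn'n hna]

end SpliceData

/-- A canonical bound for the interval `[a,b]`. -/
def NN (m : Fin k → ℕ) (a b : Fin k → ℤ) : Fin k → ℤ := coeZ m ⊔ (-a ⊔ b)

theorem NN_ge (m : Fin k → ℕ) (a b : Fin k → ℤ) : coeZ m ≤ NN m a b := le_sup_left

theorem NN_left (m : Fin k → ℕ) (a b : Fin k → ℤ) : -(NN m a b) ≤ a :=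
  neg_le_of_ge (le_sup_of_le_right le_sup_left)

theorem NN_right (m : Fin k → ℕ) (a b : Fin k → ℤ) : b ≤ NN m a b :=
  le_sup_of_le_right le_sup_right

namespace SpliceData

variable {m : Fin k → ℕ} (D : SpliceData Λ m)

/-- The segment of the spliced path over `[a,b]`. -/
noncomputable def wseg (a b : Fin k → ℤ) (hab : a ≤ b) : Λ.Mor :=
  msl Λ (D.Big (NN m a b) (NN_ge m a b)) (dN (-(NN m a b)) a) (dN a b) (dN b (NN m a b))
    (D.Big_deg3 (NN_ge m a b) (NN_left m a b) hab (NN_right m a b))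

theorem wseg_eq {a b : Fin k → ℤ} (hab : a ≤ b) {n : Fin k → ℤ} (hn : coeZ m ≤ n)
    (hna : -n ≤ a) (hbn : b ≤ n)
    (hdeg : Λ.deg (D.Big n hn) = dN (-n) a + (dN a b + dN b n)) :
    D.wseg a b hab = msl Λ (D.Big n hn) (dN (-n) a) (dN a b) (dN b n) hdeg := by
  set n' : Fin k → ℤ := n ⊔ NN m a b with hn'
  have h1 : n ≤ n' := le_sup_left
  have h2 : NN m a b ≤ n' := le_sup_right
  have e1 := D.msl_Big_mono hab hn h1 hna hbn
    (D.Big_deg3 (hn.trans h1) ((neg_le_neg h1).trans hna) hab (hbn.trans h1)) hdeg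
  have e2 := D.msl_Big_mono hab (NN_ge m a b) h2 (NN_left m a b) (NN_right m a b)
    (D.Big_deg3 ((NN_ge m a b).trans h2) ((neg_le_neg h2).trans (NN_left m a b)) hab
      ((NN_right m a b).trans h2))
    (D.Big_deg3 (NN_ge m a b) (NN_left m a b) hab (NN_right m a b))
  rw [wseg, ← e2]
  exact e1

theorem wseg_deg (a b : Fin k → ℤ) (hab : a ≤ b) : Λ.deg (D.wseg a b hab) = dN a b :=
  msl_deg Λ _ _ _ _ _

end SpliceData

end Splice2

section Splice3

variable {k : ℕ} {Λ : KGraph k}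

theorem dN_self (a : Fin k → ℤ) : dN a a = 0 := by
  funext i; simp [dN]

namespace SpliceData

variable {m : Fin k → ℕ} (D : SpliceData Λ m)

theorem wseg_comp (a b c : Fin k → ℤ) (hab : a ≤ b) (hbc : b ≤ c)
    (p : Λ.src (D.wseg a b hab) = Λ.rng (D.wseg b c hbc)) :
    Λ.comp (D.wseg a b hab) (D.wseg b c hbc) p = D.wseg a c (hab.trans hbc) := by
  set n := NN m a c with hn
  have hn0 : coeZ m ≤ n := NN_ge m a c
  have hna : -n ≤ a := NN_left m a c
  have hcn : c ≤ n := NN_right m a c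
  have hnb : -n ≤ b := hna.trans hab
  have hbn : b ≤ n := hbc.trans hcn
  have hdeg := D.Big_deg3 hn0 hna (hab.trans hbc) hcn
  have hδ := D.wseg_eq (hab.trans hbc) hn0 hna hcn hdeg
  obtain ⟨hdδ, α, γ, h2, h1, hdα, hdγ, he⟩ := msl_spec Λ (D.Big n hn0)
    (dN (-n) a) (dN a c) (dN c n) hdeg
  set δ := msl Λ (D.Big n hn0) (dN (-n) a) (dN a c) (dN c n) hdeg with hδdef
  obtain ⟨⟨δ1, δ2⟩, ⟨hd1, hd2, hc12, he12⟩, -⟩ := Λ.factor δ (dN a b) (dN b c)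
    (by rw [hdδ, dN_add hab hbc])
  have hsδ : Λ.src δ2 = Λ.rng γ := by
    have := congrArg Λ.src he12
    rw [Λ.src_comp] at this
    exact this.trans h2
  have p1 : Λ.src δ1 = Λ.rng (Λ.comp δ2 γ hsδ) := by rw [Λ.rng_comp]; exact hc12
  have pS : Λ.src (Λ.comp δ1 δ2 hc12) = Λ.rng γ := by rw [Λ.src_comp]; exact hsδ
  have h1' : Λ.src α = Λ.rng δ := by rw [Λ.rng_comp] at h1; exact h1
  have hrδ : Λ.rng δ1 = Λ.rng δ := by rw [← he12]; exact (Λ.rng_comp δ1 δ2 hc12).symm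
  have h1A : Λ.src α = Λ.rng (Λ.comp δ1 (Λ.comp δ2 γ hsδ) p1) := by
    rw [Λ.rng_comp, hrδ]; exact h1' 
  have eA : Λ.comp α (Λ.comp δ1 (Λ.comp δ2 γ hsδ) p1) h1A = D.Big n hn0 := by
    rw [← he]
    exact comp_congr rfl ((Λ.assoc δ1 δ2 γ hc12 hsδ pS p1).symm.trans
      (comp_congr he12 rfl _ _)) _ _
  have w1 : D.wseg a b hab = δ1 :=
    (D.wseg_eq hab hn0 hna hbn (D.Big_deg3 hn0 hna hab hbn)).trans
      (msl_unique hdα hd1 p1 h1A eA)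
  have pαδ1 : Λ.src α = Λ.rng δ1 := by
    have := h1A; rw [Λ.rng_comp] at this; exact this
  have pO : Λ.src (Λ.comp α δ1 pαδ1) = Λ.rng (Λ.comp δ2 γ hsδ) := by
    rw [Λ.src_comp, Λ.rng_comp]; exact hc12
  have eB : Λ.comp (Λ.comp α δ1 pαδ1) (Λ.comp δ2 γ hsδ) pO = D.Big n hn0 :=
    (Λ.assoc α δ1 (Λ.comp δ2 γ hsδ) pαδ1 p1 pO h1A).trans eA
  have w2 : D.wseg b c hbc = δ2 :=
    (D.wseg_eq hbc hn0 hnb hcn (D.Big_deg3 hn0 hnb hbc hcn)).trans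
      (msl_unique (by rw [Λ.deg_comp, hdα, hd1, dN_add hna hab]) hd2 hsδ pO eB)
  exact (comp_congr w1 w2 p hc12).trans (he12.trans hδ.symm)

theorem wseg_rng (a b : Fin k → ℤ) (hab : a ≤ b) :
    Λ.rng (D.wseg a b hab) = D.wseg a a le_rfl := by
  set n := NN m a b with hn
  have hn0 : coeZ m ≤ n := NN_ge m a b
  have hna : -n ≤ a := NN_left m a b
  have hbn : b ≤ n := NN_right m a b
  have hdeg := D.Big_deg3 hn0 hna hab hbn
  have hδ := D.wseg_eq hab hn0 hna hbn hdeg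
  obtain ⟨hdβ, α, γ, h2, h1, hdα, hdγ, he⟩ := msl_spec Λ (D.Big n hn0)
    (dN (-n) a) (dN a b) (dN b n) hdeg
  set β := msl Λ (D.Big n hn0) (dN (-n) a) (dN a b) (dN b n) hdeg with hβdef
  have p2' : Λ.src (Λ.rng β) = Λ.rng (Λ.comp β γ h2) := by
    rw [Λ.src_obj _ (Λ.deg_rng β), Λ.rng_comp]
  have p1' : Λ.src α = Λ.rng (Λ.comp (Λ.rng β) (Λ.comp β γ h2) p2') := by
    rw [Λ.rng_comp, Λ.rng_obj _ (Λ.deg_rng β)]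
    rw [Λ.rng_comp] at h1
    exact h1
  have pid : Λ.src (Λ.rng (Λ.comp β γ h2)) = Λ.rng (Λ.comp β γ h2) :=
    Λ.src_obj _ (Λ.deg_rng _)
  have he' : Λ.comp α (Λ.comp (Λ.rng β) (Λ.comp β γ h2) p2') p1' = D.Big n hn0 := by
    rw [← he]
    exact comp_congr rfl ((comp_congr (Λ.rng_comp β γ h2).symm rfl p2' pid).trans
      (Λ.id_comp _ pid)) _ _
  calc Λ.rng (D.wseg a b hab) = Λ.rng β := congrArg Λ.rng hδ
    _ = msl Λ (D.Big n hn0) (dN (-n) a) (dN a a) (dN a n)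
          (D.Big_deg3 hn0 hna le_rfl (hab.trans hbn)) :=
        (msl_unique hdα (by rw [dN_self]; exact Λ.deg_rng β) p2' p1' he').symm
    _ = D.wseg a a le_rfl := (D.wseg_eq le_rfl hn0 hna (hab.trans hbn) _).symm

theorem wseg_src (a b : Fin k → ℤ) (hab : a ≤ b) :
    Λ.src (D.wseg a b hab) = D.wseg b b le_rfl := by
  set n := NN m a b with hn
  have hn0 : coeZ m ≤ n := NN_ge m a b
  have hna : -n ≤ a := NN_left m a b
  have hbn : b ≤ n := NN_right m a b
  have hdeg := D.Big_deg3 hn0 hna hab hbn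
  have hδ := D.wseg_eq hab hn0 hna hbn hdeg
  obtain ⟨hdβ, α, γ, h2, h1, hdα, hdγ, he⟩ := msl_spec Λ (D.Big n hn0)
    (dN (-n) a) (dN a b) (dN b n) hdeg
  set β := msl Λ (D.Big n hn0) (dN (-n) a) (dN a b) (dN b n) hdeg with hβdef
  have pαβ : Λ.src α = Λ.rng β := by rw [Λ.rng_comp] at h1; exact h1
  have psγ : Λ.src (Λ.src β) = Λ.rng γ := by
    rw [Λ.src_obj _ (Λ.deg_src β)]; exact h2
  have pOO : Λ.src (Λ.comp α β pαβ) = Λ.rng (Λ.comp (Λ.src β) γ psγ) := by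
    rw [Λ.src_comp, Λ.rng_comp, Λ.rng_obj _ (Λ.deg_src β)]
  have pid2 : Λ.src (Λ.rng γ) = Λ.rng γ := Λ.src_obj _ (Λ.deg_rng _)
  have e0 : Λ.comp (Λ.src β) γ psγ = γ :=
    (comp_congr h2 rfl psγ pid2).trans (Λ.id_comp γ pid2)
  have he'' : Λ.comp (Λ.comp α β pαβ) (Λ.comp (Λ.src β) γ psγ) pOO = D.Big n hn0 := by
    rw [← he]
    exact (comp_congr rfl e0 _ _).trans
      (Λ.assoc α β γ pαβ h2 (by rw [Λ.src_comp]; exact h2) h1)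
  calc Λ.src (D.wseg a b hab) = Λ.src β := congrArg Λ.src hδ
    _ = msl Λ (D.Big n hn0) (dN (-n) b) (dN b b) (dN b n)
          (D.Big_deg3 hn0 (hna.trans hab) le_rfl hbn) :=
        (msl_unique (by rw [Λ.deg_comp, hdα, hdβ, dN_add hna hab])
          (by rw [dN_self]; exact Λ.deg_src β) psγ pOO he'').symm
    _ = D.wseg b b le_rfl := (D.wseg_eq le_rfl hn0 (hna.trans hab) hbn _).symm

/-- The spliced path. -/
noncomputable def w : TwoSidedPath Λ where
  toFun a b hab := D.wseg a b hab
  deg_eq a b hab i := by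
    rw [D.wseg_deg]
    have : a i ≤ b i := hab i
    simp only [dN]
    omega
  src_eq a b hab := D.wseg_src a b hab
  rng_eq a b hab := D.wseg_rng a b hab
  comp_eq a b c h1 h2 := D.wseg_comp a b c h1 h2 _

theorem w_toFun (a b : Fin k → ℤ) (hab : a ≤ b) :
    (D.w).toFun a b hab = D.wseg a b hab := rfl

end SpliceData

end Splice3

section Splice4

variable {k : ℕ} {Λ : KGraph k}

namespace SpliceData

variable {m : Fin k → ℕ} (D : SpliceData Λ m)

theorem rng_nu : Λ.rng D.nu = D.z.toFun (-(coeZ m)) (-(coeZ m)) le_rfl := by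
  rw [D.hrng, ← D.hz, D.z.rng_eq]

theorem src_nu : Λ.src D.nu = D.z.toFun (coeZ m) (coeZ m) le_rfl := by
  rw [D.hsrc, ← D.hz, D.z.src_eq]

/-- The middle of the spliced path is `nu`. -/
theorem w_mid : D.wseg (-(coeZ m)) (coeZ m) (neg_coeZ_le m) = D.nu := by
  have hdeg := D.Big_deg3 (le_refl (coeZ m)) le_rfl (neg_coeZ_le m) le_rfl
  set A0 := D.z.toFun (-(coeZ m)) (-(coeZ m)) (neg_le_neg le_rfl) with hA0
  set C0 := D.z.toFun (coeZ m) (coeZ m) le_rfl with hC0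
  have p : Λ.src A0 = Λ.rng D.nu := D.comp1 le_rfl
  have f : Λ.src D.nu = Λ.rng C0 := D.comp2 le_rfl
  have q : Λ.src (Λ.comp A0 D.nu p) = Λ.rng C0 := by rw [Λ.src_comp]; exact f
  have g : Λ.src A0 = Λ.rng (Λ.comp D.nu C0 f) := by rw [Λ.rng_comp]; exact p
  have eBig : D.Big (coeZ m) le_rfl = Λ.comp (Λ.comp A0 D.nu p) C0 q := rfl
  have he'' : Λ.comp A0 (Λ.comp D.nu C0 f) g = D.Big (coeZ m) le_rfl :=
    (Λ.assoc A0 D.nu C0 p f q g).symm.trans eBig.symm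
  rw [D.wseg_eq (neg_coeZ_le m) le_rfl le_rfl le_rfl hdeg]
  exact msl_unique (deg_toFun D.z _ _ _) (D.hd.trans D.deg_lam) f g he''

/-- To the right of `m`, the spliced path agrees with `z`. -/
theorem w_right {a b : Fin k → ℤ} (hMa : coeZ m ≤ a) (hab : a ≤ b) :
    D.wseg a b hab = D.z.toFun a b hab := by
  set n := NN m a b with hn
  have hn0 : coeZ m ≤ n := NN_ge m a b
  have hna : -n ≤ a := NN_left m a b
  have hbn : b ≤ n := NN_right m a b
  set A := D.z.toFun (-n) (-(coeZ m)) (neg_le_neg hn0) with hA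
  set P := D.z.toFun (coeZ m) a hMa with hP
  set W := D.z.toFun a b hab with hW
  set V := D.z.toFun b n hbn with hV
  have f2 : Λ.src W = Λ.rng V := (D.z.src_eq _ _ _).trans (D.z.rng_eq _ _ _).symm
  have f1 : Λ.src P = Λ.rng (Λ.comp W V f2) := by
    rw [Λ.rng_comp]; exact (D.z.src_eq _ _ _).trans (D.z.rng_eq _ _ _).symm
  have p1 : Λ.src A = Λ.rng D.nu := D.comp1 hn0
  set BB := Λ.comp A D.nu p1 with hBB
  have q' : Λ.src BB = Λ.rng (Λ.comp P (Λ.comp W V f2) f1) := by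
    rw [Λ.src_comp, Λ.rng_comp]; exact D.comp2 hMa
  have step1 : Λ.comp BB (Λ.comp P (Λ.comp W V f2) f1) q' = D.Big n hn0 := by
    rw [Big]
    exact comp_congr rfl (comp3 D.z hMa hab hbn f2 f1) _ _
  have pBBP : Λ.src BB = Λ.rng P := by rw [Λ.src_comp]; exact D.comp2 hMa
  have pfinal : Λ.src (Λ.comp BB P pBBP) = Λ.rng (Λ.comp W V f2) := by
    rw [Λ.src_comp]; exact f1
  have he_r : Λ.comp (Λ.comp BB P pBBP) (Λ.comp W V f2) pfinal = D.Big n hn0 :=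
    (Λ.assoc BB P (Λ.comp W V f2) pBBP f1 pfinal q').trans step1
  rw [D.wseg_eq hab hn0 hna hbn (D.Big_deg3 hn0 hna hab hbn)]
  refine msl_unique ?_ (deg_toFun D.z a b hab) f2 pfinal he_r
  rw [Λ.deg_comp, Λ.deg_comp, deg_toFun, deg_toFun, D.hd, D.deg_lam,
    dN_add (neg_le_neg hn0) (neg_coeZ_le m),
    dN_add ((neg_le_neg hn0).trans (neg_coeZ_le m)) hMa]

/-- To the left of `-m`, the spliced path agrees with `z`. -/
theorem w_left {a b : Fin k → ℤ} (hab : a ≤ b) (hbM : b ≤ -(coeZ m)) :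
    D.wseg a b hab = D.z.toFun a b hab := by
  set n := NN m a b with hn
  have hn0 : coeZ m ≤ n := NN_ge m a b
  have hna : -n ≤ a := NN_left m a b
  have hbn : b ≤ n := NN_right m a b
  set P := D.z.toFun (-n) a hna with hP
  set W := D.z.toFun a b hab with hW
  set V := D.z.toFun b (-(coeZ m)) hbM with hV
  set C := D.z.toFun (coeZ m) n hn0 with hC
  have fVν : Λ.src V = Λ.rng D.nu := (D.z.src_eq _ _ _).trans D.rng_nu.symm
  have f2 : Λ.src W = Λ.rng V := (D.z.src_eq _ _ _).trans (D.z.rng_eq _ _ _).symm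
  have f1 : Λ.src P = Λ.rng (Λ.comp W V f2) := by
    rw [Λ.rng_comp]; exact (D.z.src_eq _ _ _).trans (D.z.rng_eq _ _ _).symm
  set QWV := Λ.comp W V f2 with hQWV
  have fνC : Λ.src D.nu = Λ.rng C := D.comp2 hn0
  have pX : Λ.src (Λ.comp P QWV f1) = Λ.rng D.nu := by
    rw [Λ.src_comp, hQWV, Λ.src_comp]; exact fVν
  have qX : Λ.src (Λ.comp (Λ.comp P QWV f1) D.nu pX) = Λ.rng C := by
    rw [Λ.src_comp]; exact fνC
  have step1 : Λ.comp (Λ.comp (Λ.comp P QWV f1) D.nu pX) C qX = D.Big n hn0 := by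
    rw [Big]
    exact comp_congr (comp_congr (comp3 D.z hna hab hbM f2 f1) rfl _ _) rfl _ _
  have pQν : Λ.src QWV = Λ.rng D.nu := by rw [hQWV, Λ.src_comp]; exact fVν
  have pPQν : Λ.src P = Λ.rng (Λ.comp QWV D.nu pQν) := by rw [Λ.rng_comp]; exact f1
  have q2 : Λ.src (Λ.comp P (Λ.comp QWV D.nu pQν) pPQν) = Λ.rng C := by
    rw [Λ.src_comp, Λ.src_comp]; exact fνC
  have s2 : Λ.comp (Λ.comp (Λ.comp P QWV f1) D.nu pX) C qX =
      Λ.comp (Λ.comp P (Λ.comp QWV D.nu pQν) pPQν) C q2 :=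
    comp_congr (Λ.assoc P QWV D.nu f1 pQν pX pPQν) rfl qX q2
  have pQνC : Λ.src (Λ.comp QWV D.nu pQν) = Λ.rng C := by
    rw [Λ.src_comp]; exact fνC
  have pP3 : Λ.src P = Λ.rng (Λ.comp (Λ.comp QWV D.nu pQν) C pQνC) := by
    rw [Λ.rng_comp, Λ.rng_comp]; exact f1
  have s3 : Λ.comp (Λ.comp P (Λ.comp QWV D.nu pQν) pPQν) C q2 =
      Λ.comp P (Λ.comp (Λ.comp QWV D.nu pQν) C pQνC) pP3 :=
    Λ.assoc P (Λ.comp QWV D.nu pQν) C pPQν pQνC q2 pP3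
  have pQ4 : Λ.src QWV = Λ.rng (Λ.comp D.nu C fνC) := by rw [Λ.rng_comp]; exact pQν
  have pP4 : Λ.src P = Λ.rng (Λ.comp QWV (Λ.comp D.nu C fνC) pQ4) := by
    rw [Λ.rng_comp]; exact f1
  have s4 : Λ.comp P (Λ.comp (Λ.comp QWV D.nu pQν) C pQνC) pP3 =
      Λ.comp P (Λ.comp QWV (Λ.comp D.nu C fνC) pQ4) pP4 :=
    comp_congr rfl (Λ.assoc QWV D.nu C pQν fνC pQνC pQ4) pP3 pP4
  have fV5 : Λ.src V = Λ.rng (Λ.comp D.nu C fνC) := by rw [Λ.rng_comp]; exact fVν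
  have fW5 : Λ.src W = Λ.rng (Λ.comp V (Λ.comp D.nu C fνC) fV5) := by
    rw [Λ.rng_comp]; exact f2
  have pP5 : Λ.src P = Λ.rng (Λ.comp W (Λ.comp V (Λ.comp D.nu C fνC) fV5) fW5) := by
    rw [Λ.rng_comp]
    have := f1; rw [Λ.rng_comp] at this; exact this
  have s5 : Λ.comp P (Λ.comp QWV (Λ.comp D.nu C fνC) pQ4) pP4 =
      Λ.comp P (Λ.comp W (Λ.comp V (Λ.comp D.nu C fνC) fV5) fW5) pP5 :=
    comp_congr rfl (Λ.assoc W V (Λ.comp D.nu C fνC) f2 fV5 pQ4 fW5) pP4 pP5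
  have he_l : Λ.comp P (Λ.comp W (Λ.comp V (Λ.comp D.nu C fνC) fV5) fW5) pP5 =
      D.Big n hn0 :=
    (s5.symm.trans (s4.symm.trans (s3.symm.trans s2.symm))).trans step1
  rw [D.wseg_eq hab hn0 hna hbn (D.Big_deg3 hn0 hna hab hbn)]
  exact msl_unique (deg_toFun D.z _ _ _) (deg_toFun D.z a b hab) fW5 pP5 he_l

/-- The spliced segment depends only on `nu` and on the big segment of `z`. -/
theorem wseg_congr (D' : SpliceData Λ m) (hν : D.nu = D'.nu)
    {a b n : Fin k → ℤ} (hab : a ≤ b) (hn : coeZ m ≤ n) (hna : -n ≤ a) (hbn : b ≤ n)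
    (hnn : -n ≤ n)
    (hzz : D.z.toFun (-n) n hnn = D'.z.toFun (-n) n hnn) :
    D.wseg a b hab = D'.wseg a b hab := by
  have hnM : -n ≤ -(coeZ m) := neg_le_neg hn
  have hMn : -(coeZ m) ≤ n := (neg_coeZ_le m).trans hn
  have e1 : D.z.toFun (-n) (-(coeZ m)) hnM = D'.z.toFun (-n) (-(coeZ m)) hnM :=
    (toFun_eq_msl D.z le_rfl hnM hMn (deg_toFun_eq D.z le_rfl hnM hMn)).symm.trans
      ((msl_congr hzz _ _ _ _ _).trans
        (toFun_eq_msl D'.z le_rfl hnM hMn (deg_toFun_eq D'.z le_rfl hnM hMn)))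
  have e2 : D.z.toFun (coeZ m) n hn = D'.z.toFun (coeZ m) n hn :=
    (toFun_eq_msl D.z (hnM.trans (neg_coeZ_le m)) hn le_rfl
        (deg_toFun_eq D.z (hnM.trans (neg_coeZ_le m)) hn le_rfl)).symm.trans
      ((msl_congr hzz _ _ _ _ _).trans
        (toFun_eq_msl D'.z (hnM.trans (neg_coeZ_le m)) hn le_rfl
          (deg_toFun_eq D'.z (hnM.trans (neg_coeZ_le m)) hn le_rfl)))
  have eB : D.Big n hn = D'.Big n hn := by
    rw [Big, Big]
    exact comp_congr (comp_congr e1 hν _ _) e2 _ _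
  rw [D.wseg_eq hab hn hna hbn (D.Big_deg3 hn hna hab hbn),
    D'.wseg_eq hab hn hna hbn (D'.Big_deg3 hn hna hab hbn)]
  exact msl_congr eB _ _ _ _ _

end SpliceData

end Splice4

section ContAux

variable {k : ℕ} {Λ : KGraph k}

theorem isOpen_ZCyl (lam : Λ.Mor) (n : Fin k → ℤ) : IsOpen (ZCyl Λ lam n) :=
  TopologicalSpace.isOpen_generateFrom_of_mem ⟨lam, n, rfl⟩

theorem mem_ZCyl_iff_of_seg {z0 : TwoSidedPath Λ} {N : Fin k → ℤ} {hN : -N ≤ N}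
    (w : TwoSidedPath Λ) :
    w ∈ ZCyl Λ (z0.toFun (-N) N hN) (-N) ↔
      w.toFun (-N) N hN = z0.toFun (-N) N hN := by
  have hEq : -N + Λ.degZ (z0.toFun (-N) N hN) = N := by
    funext i
    have := z0.deg_eq (-N) N hN i
    simp only [Pi.add_apply, KGraph.degZ, Pi.neg_apply] at this ⊢
    omega
  constructor
  · intro hw
    exact (w.toFun_congr rfl hEq.symm hN _).trans hw
  · intro hw
    exact (w.toFun_congr rfl hEq _ hN).trans hw

/-- A map into the two-sided path space which depends locally (on a finite window)
on its argument is continuous. -/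
theorem continuous_of_local {X : Type} [TopologicalSpace X]
    (G : X → TwoSidedPath Λ) (V : X → TwoSidedPath Λ)
    (hV : Continuous V)
    (hloc : ∀ a b : Fin k → ℤ, ∀ hab : a ≤ b, ∃ (N : Fin k → ℤ) (hN : -N ≤ N),
      ∀ x1 x2 : X, (V x1).toFun (-N) N hN = (V x2).toFun (-N) N hN →
        (G x1).toFun a b hab = (G x2).toFun a b hab) :
    Continuous G := by
  apply continuous_generateFrom_iff.mpr
  rintro S ⟨μ, n₀, rfl⟩
  obtain ⟨N, hN, hdep⟩ := hloc n₀ (n₀ + Λ.degZ μ) (le_add_degZ Λ n₀ μ)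
  have hkey : G ⁻¹' (ZCyl Λ μ n₀) =
      V ⁻¹' (⋃ τ ∈ {τ : Λ.Mor | ∃ x0 : X, (V x0).toFun (-N) N hN = τ ∧
        G x0 ∈ ZCyl Λ μ n₀}, ZCyl Λ τ (-N)) := by
    ext x
    simp only [Set.mem_preimage, Set.mem_iUnion, Set.mem_setOf_eq]
    constructor
    · intro hx
      refine ⟨(V x).toFun (-N) N hN, ⟨x, rfl, hx⟩, ?_⟩
      exact (V x).self_mem_cyl (-N) N hN
    · rintro ⟨τ, ⟨x0, rfl, hx0⟩, hmem⟩
      have hseg : (V x).toFun (-N) N hN = (V x0).toFun (-N) N hN :=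
        (mem_ZCyl_iff_of_seg (V x)).mp hmem
      show (G x).toFun n₀ (n₀ + Λ.degZ μ) _ = μ
      rw [hdep x x0 hseg]
      exact hx0
  rw [hkey]
  apply (IsOpen.preimage hV)
  exact isOpen_biUnion fun τ _ => isOpen_ZCyl τ (-N)

end ContAux

/-- Given `m ∈ ℕ^k` and asymptotically equivalent `x, y` agreeing
outside `(-m, m)`, with `λ = x(-m,m)` and `ν = y(-m,m)`, there is a unique map
`φ : Z(λ,-m) → Z(ν,-m)` agreeing with the identity on both tails; it sends
`x` to `y`, satisfies `z ∼ₐ φ(z)`, and is a homeomorphism onto `Z(ν,-m)`. -/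
theorem asymptotic_local_homeomorphism {k : ℕ} (hk : 0 < k) (Λ : KGraph k)
    (hstar : Λ.Star) (m : Fin k → ℕ) (x y : TwoSidedPath Λ)
    (hagree : ∀ n : Fin k → ℤ, coeZ m ≤ n →
      (∀ h : coeZ m ≤ n, x.toFun (coeZ m) n h = y.toFun (coeZ m) n h) ∧
      (∀ h' : -n ≤ -(coeZ m),
        x.toFun (-n) (-(coeZ m)) h' = y.toFun (-n) (-(coeZ m)) h')) :
    ∃ φ : ↥(ZCyl Λ (x.toFun (-(coeZ m)) (coeZ m) (neg_coeZ_le m)) (-(coeZ m))) →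
        ↥(ZCyl Λ (y.toFun (-(coeZ m)) (coeZ m) (neg_coeZ_le m)) (-(coeZ m))),
      (∀ z (n : Fin k → ℤ) (hn : coeZ m ≤ n),
        (∀ h : coeZ m ≤ n,
          (φ z).1.toFun (coeZ m) n h = z.1.toFun (coeZ m) n h) ∧
        (∀ h' : -n ≤ -(coeZ m),
          (φ z).1.toFun (-n) (-(coeZ m)) h' = z.1.toFun (-n) (-(coeZ m)) h')) ∧
      (∀ φ' : ↥(ZCyl Λ (x.toFun (-(coeZ m)) (coeZ m) (neg_coeZ_le m)) (-(coeZ m))) →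
          ↥(ZCyl Λ (y.toFun (-(coeZ m)) (coeZ m) (neg_coeZ_le m)) (-(coeZ m))),
        (∀ z (n : Fin k → ℤ) (hn : coeZ m ≤ n),
          (∀ h : coeZ m ≤ n,
            (φ' z).1.toFun (coeZ m) n h = z.1.toFun (coeZ m) n h) ∧
          (∀ h' : -n ≤ -(coeZ m),
            (φ' z).1.toFun (-n) (-(coeZ m)) h' =
              z.1.toFun (-n) (-(coeZ m)) h')) → φ' = φ) ∧
      φ ⟨x, x.self_mem_cyl (-(coeZ m)) (coeZ m) (neg_coeZ_le m)⟩ =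
        ⟨y, y.self_mem_cyl (-(coeZ m)) (coeZ m) (neg_coeZ_le m)⟩ ∧
      (∀ z, ARel z.1 (φ z).1) ∧
      Continuous φ ∧ Function.Bijective φ ∧ IsOpenMap φ := by
  classical
  have hd : Λ.deg (y.toFun (-(coeZ m)) (coeZ m) (neg_coeZ_le m)) =
      Λ.deg (x.toFun (-(coeZ m)) (coeZ m) (neg_coeZ_le m)) := by
    rw [deg_toFun, deg_toFun]
  have hrng : Λ.rng (y.toFun (-(coeZ m)) (coeZ m) (neg_coeZ_le m)) =
      Λ.rng (x.toFun (-(coeZ m)) (coeZ m) (neg_coeZ_le m)) := by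
    rw [x.rng_eq, y.rng_eq]
    exact ((hagree (coeZ m) le_rfl).2 le_rfl).symm
  have hsrc : Λ.src (y.toFun (-(coeZ m)) (coeZ m) (neg_coeZ_le m)) =
      Λ.src (x.toFun (-(coeZ m)) (coeZ m) (neg_coeZ_le m)) := by
    rw [x.src_eq, y.src_eq]
    exact ((hagree (coeZ m) le_rfl).1 le_rfl).symm
  let Dx : ↥(ZCyl Λ (x.toFun (-(coeZ m)) (coeZ m) (neg_coeZ_le m)) (-(coeZ m))) →
      SpliceData Λ m := fun z =>
    ⟨x.toFun (-(coeZ m)) (coeZ m) (neg_coeZ_le m),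
     y.toFun (-(coeZ m)) (coeZ m) (neg_coeZ_le m), z.1, hd, hrng, hsrc,
     (mem_ZCyl_iff_of_seg z.1).mp z.2⟩
  let Dy : ↥(ZCyl Λ (y.toFun (-(coeZ m)) (coeZ m) (neg_coeZ_le m)) (-(coeZ m))) →
      SpliceData Λ m := fun z =>
    ⟨y.toFun (-(coeZ m)) (coeZ m) (neg_coeZ_le m),
     x.toFun (-(coeZ m)) (coeZ m) (neg_coeZ_le m), z.1, hd.symm, hrng.symm, hsrc.symm,
     (mem_ZCyl_iff_of_seg z.1).mp z.2⟩
  let φ : ↥(ZCyl Λ (x.toFun (-(coeZ m)) (coeZ m) (neg_coeZ_le m)) (-(coeZ m))) →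
      ↥(ZCyl Λ (y.toFun (-(coeZ m)) (coeZ m) (neg_coeZ_le m)) (-(coeZ m))) := fun z =>
    ⟨(Dx z).w, (mem_ZCyl_iff_of_seg (Dx z).w).mpr (Dx z).w_mid⟩
  let ψ : ↥(ZCyl Λ (y.toFun (-(coeZ m)) (coeZ m) (neg_coeZ_le m)) (-(coeZ m))) →
      ↥(ZCyl Λ (x.toFun (-(coeZ m)) (coeZ m) (neg_coeZ_le m)) (-(coeZ m))) := fun z =>
    ⟨(Dy z).w, (mem_ZCyl_iff_of_seg (Dy z).w).mpr (Dy z).w_mid⟩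
  have Htail : ∀ z (n : Fin k → ℤ) (hn : coeZ m ≤ n),
      (∀ h : coeZ m ≤ n,
        (φ z).1.toFun (coeZ m) n h = z.1.toFun (coeZ m) n h) ∧
      (∀ h' : -n ≤ -(coeZ m),
        (φ z).1.toFun (-n) (-(coeZ m)) h' = z.1.toFun (-n) (-(coeZ m)) h') :=
    fun z n hn =>
      ⟨fun h => (Dx z).w_right le_rfl h, fun h' => (Dx z).w_left h' le_rfl⟩
  have Htail' : ∀ z (n : Fin k → ℤ) (hn : coeZ m ≤ n),
      (∀ h : coeZ m ≤ n,
        (ψ z).1.toFun (coeZ m) n h = z.1.toFun (coeZ m) n h) ∧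
      (∀ h' : -n ≤ -(coeZ m),
        (ψ z).1.toFun (-n) (-(coeZ m)) h' = z.1.toFun (-n) (-(coeZ m)) h') :=
    fun z n hn =>
      ⟨fun h => (Dy z).w_right le_rfl h, fun h' => (Dy z).w_left h' le_rfl⟩
  have hψφ : ∀ z, ψ (φ z) = z := by
    intro z
    apply Subtype.ext
    apply path_ext_of_tails m
    · exact ((mem_ZCyl_iff_of_seg _).mp (ψ (φ z)).2).trans
        ((mem_ZCyl_iff_of_seg _).mp z.2).symm
    · exact fun n h => ((Htail' (φ z) n h).1 h).trans ((Htail z n h).1 h)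
    · exact fun n hn h' => ((Htail' (φ z) n hn).2 h').trans ((Htail z n hn).2 h')
  have hφψ : ∀ z, φ (ψ z) = z := by
    intro z
    apply Subtype.ext
    apply path_ext_of_tails m
    · exact ((mem_ZCyl_iff_of_seg _).mp (φ (ψ z)).2).trans
        ((mem_ZCyl_iff_of_seg _).mp z.2).symm
    · exact fun n h => ((Htail (ψ z) n h).1 h).trans ((Htail' z n h).1 h)
    · exact fun n hn h' => ((Htail (ψ z) n hn).2 h').trans ((Htail' z n hn).2 h')
  have contG : Continuous (fun z => ((φ z).1 : TwoSidedPath Λ)) := by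
    apply continuous_of_local _ (fun z => (z.1 : TwoSidedPath Λ)) continuous_subtype_val
    intro a b hab
    have hNN : -(NN m a b) ≤ NN m a b :=
      (NN_left m a b).trans (hab.trans (NN_right m a b))
    exact ⟨NN m a b, hNN, fun z1 z2 hseg =>
      (Dx z1).wseg_congr (Dx z2) rfl hab (NN_ge m a b) (NN_left m a b)
        (NN_right m a b) hNN hseg⟩
  have contG' : Continuous (fun z => ((ψ z).1 : TwoSidedPath Λ)) := by
    apply continuous_of_local _ (fun z => (z.1 : TwoSidedPath Λ)) continuous_subtype_val
    intro a b hab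
    have hNN : -(NN m a b) ≤ NN m a b :=
      (NN_left m a b).trans (hab.trans (NN_right m a b))
    exact ⟨NN m a b, hNN, fun z1 z2 hseg =>
      (Dy z1).wseg_congr (Dy z2) rfl hab (NN_ge m a b) (NN_left m a b)
        (NN_right m a b) hNN hseg⟩
  have contφ : Continuous φ := Continuous.subtype_mk contG _
  have contψ : Continuous ψ := Continuous.subtype_mk contG' _
  refine ⟨φ, Htail, ?_, ?_, ?_, contφ, ?_, ?_⟩
  · -- uniqueness
    intro φ' hφ'
    funext z
    apply Subtype.ext
    apply path_ext_of_tails m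
    · exact ((mem_ZCyl_iff_of_seg _).mp (φ' z).2).trans
        ((mem_ZCyl_iff_of_seg _).mp (φ z).2).symm
    · exact fun n h => ((hφ' z n h).1 h).trans (((Htail z n h).1 h).symm)
    · exact fun n hn h' => ((hφ' z n hn).2 h').trans (((Htail z n hn).2 h').symm)
  · -- φ x = y
    apply Subtype.ext
    apply path_ext_of_tails m
    · exact (mem_ZCyl_iff_of_seg _).mp
        (φ ⟨x, x.self_mem_cyl (-(coeZ m)) (coeZ m) (neg_coeZ_le m)⟩).2
    · exact fun n h =>
        ((Htail ⟨x, x.self_mem_cyl (-(coeZ m)) (coeZ m) (neg_coeZ_le m)⟩ n h).1 h).trans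
          ((hagree n h).1 h)
    · exact fun n hn h' =>
        ((Htail ⟨x, x.self_mem_cyl (-(coeZ m)) (coeZ m) (neg_coeZ_le m)⟩ n hn).2 h').trans
          ((hagree n hn).2 h')
  · -- asymptotic equivalence
    exact fun z => ⟨m, fun n hn =>
      ⟨fun h => ((Htail z n hn).1 h).symm, fun h' => ((Htail z n hn).2 h').symm⟩⟩
  · -- bijective
    exact ⟨Function.LeftInverse.injective hψφ, Function.RightInverse.surjective hφψ⟩
  · -- open map
    exact (Homeomorph.mk ⟨φ, ψ, hψφ, hφψ⟩ contφ contψ).isOpenMap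
end
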